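/- Let p ≥ 2 be an integer and let A be an n×n matrix whose entries are formal power series in ℂ[[z]] and whose constant-term matrix A(0) is invertible. Then there exists a unique n×n matrix F with entries in ℂ[[z]] such that F(0) = Iₙ (the constant-term matrix of F is the identity) and A(z)·F(z) = F(z^p)·A(0), where F(z^p) denotes the matrix obtained by substituting z^p for z in every entry of F. Moreover F is invertible over ℂ[[z]]. -/

import Mathlib

/-- The Mahler substitution `f(z) ↦ f(z^p)` on formal power series, defined via
coefficients: the coefficient of `z^k` in `f(z^p)` is the coefficient of `z^(k/p)`
in `f` when `p ∣ k`, and `0` otherwise. -/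
noncomputable def mahlerSubst (p : ℕ) (f : PowerSeries ℂ) : PowerSeries ℂ :=
  PowerSeries.mk fun k => if p ∣ k then PowerSeries.coeff (R := ℂ) (k / p) f else 0

namespace MahlerAux

variable {n : ℕ}

/-- coefficient matrix -/
noncomputable def cM (m : ℕ) (M : Matrix (Fin n) (Fin n) (PowerSeries ℂ)) :
    Matrix (Fin n) (Fin n) ℂ := M.map (PowerSeries.coeff (R := ℂ) m)

lemma cM_mul (m : ℕ) (M N : Matrix (Fin n) (Fin n) (PowerSeries ℂ)) :
    cM m (M * N) = ∑ ij ∈ Finset.HasAntidiagonal.antidiagonal m, cM ij.1 M * cM ij.2 N := by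
  ext a b
  simp only [cM, Matrix.map_apply, Matrix.mul_apply, Matrix.sum_apply, map_sum,
    PowerSeries.coeff_mul]
  rw [Finset.sum_comm]

lemma matrix_ext_coeff {M N : Matrix (Fin n) (Fin n) (PowerSeries ℂ)}
    (h : ∀ m, cM m M = cM m N) : M = N := by
  ext a b k
  exact congrFun (congrFun (h k) a) b

/-- `seqF` is the sequence of coefficient matrices of the fundamental solution. -/
noncomputable def seqF (p : ℕ) (hp : 2 ≤ p) (A : Matrix (Fin n) (Fin n) (PowerSeries ℂ)) :
    ℕ → Matrix (Fin n) (Fin n) ℂ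
  | m =>
    if hm : m = 0 then 1
    else
      (cM 0 A)⁻¹ *
        ((if p ∣ m then seqF p hp A (m / p) else 0) * cM 0 A -
          ∑ i ∈ (Finset.Ico 1 (m + 1)).attach, cM i.1 A * seqF p hp A (m - i.1))
  termination_by m => m
  decreasing_by
  · exact Nat.div_lt_self (Nat.pos_of_ne_zero hm) hp
  · have := (Finset.mem_Ico.mp i.2).1
    exact Nat.sub_lt (Nat.pos_of_ne_zero hm) this

/-- A sequence of coefficient matrices is "good" if it satisfies the recursion. -/
def Good (p : ℕ) (A : Matrix (Fin n) (Fin n) (PowerSeries ℂ))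
    (G : ℕ → Matrix (Fin n) (Fin n) ℂ) : Prop :=
  G 0 = 1 ∧ ∀ m, (∑ ij ∈ Finset.HasAntidiagonal.antidiagonal m, cM ij.1 A * G ij.2)
    = (if p ∣ m then G (m / p) else 0) * cM 0 A

lemma sum_antidiag_split (m : ℕ) (A : Matrix (Fin n) (Fin n) (PowerSeries ℂ))
    (G : ℕ → Matrix (Fin n) (Fin n) ℂ) :
    (∑ ij ∈ Finset.HasAntidiagonal.antidiagonal m, cM ij.1 A * G ij.2)
      = cM 0 A * G m + ∑ i ∈ Finset.Ico 1 (m + 1), cM i A * G (m - i) := by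
  rw [Finset.Nat.sum_antidiagonal_eq_sum_range_succ_mk]
  rw [Finset.range_eq_Ico, Finset.sum_eq_sum_Ico_succ_bot (Nat.succ_pos m)]
  simp

lemma good_unique {p : ℕ} {A : Matrix (Fin n) (Fin n) (PowerSeries ℂ)}
    (hp : 2 ≤ p) (hA0 : IsUnit (cM 0 A).det)
    {G H : ℕ → Matrix (Fin n) (Fin n) ℂ} (hG : Good p A G) (hH : Good p A H) :
    G = H := by
  funext m
  induction m using Nat.strong_induction_on with
  | _ m ih =>
    rcases eq_or_ne m 0 with rfl | hm
    · rw [hG.1, hH.1]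
    have h1 := hG.2 m
    have h2 := hH.2 m
    rw [sum_antidiag_split m A G] at h1
    rw [sum_antidiag_split m A H] at h2
    have hdiv : (if p ∣ m then G (m / p) else 0) = (if p ∣ m then H (m / p) else 0) := by
      split_ifs with h
      · exact ih _ (Nat.div_lt_self (Nat.pos_of_ne_zero hm) hp)
      · rfl
    have hsum : (∑ i ∈ Finset.Ico 1 (m + 1), cM i A * G (m - i))
        = ∑ i ∈ Finset.Ico 1 (m + 1), cM i A * H (m - i) := by
      refine Finset.sum_congr rfl fun i hi => ?_
      rw [ih _ (Nat.sub_lt (Nat.pos_of_ne_zero hm) (Finset.mem_Ico.mp hi).1)]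
    have key : cM 0 A * G m = cM 0 A * H m := by
      have h3 : cM 0 A * G m + (∑ i ∈ Finset.Ico 1 (m + 1), cM i A * G (m - i))
          = cM 0 A * H m + (∑ i ∈ Finset.Ico 1 (m + 1), cM i A * G (m - i)) := by
        rw [h1, hdiv, ← h2, hsum]
      exact add_right_cancel h3
    calc G m = 1 * G m := (one_mul _).symm
      _ = ((cM 0 A)⁻¹ * cM 0 A) * G m := by rw [Matrix.nonsing_inv_mul _ hA0]
      _ = (cM 0 A)⁻¹ * (cM 0 A * G m) := by rw [Matrix.mul_assoc]
      _ = (cM 0 A)⁻¹ * (cM 0 A * H m) := by rw [key]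
      _ = H m := by rw [← Matrix.mul_assoc, Matrix.nonsing_inv_mul _ hA0, one_mul]

lemma seqF_zero (p : ℕ) (hp : 2 ≤ p) (A : Matrix (Fin n) (Fin n) (PowerSeries ℂ)) :
    seqF p hp A 0 = 1 := by rw [seqF]; simp

lemma seqF_good {p : ℕ} (hp : 2 ≤ p) {A : Matrix (Fin n) (Fin n) (PowerSeries ℂ)}
    (hA0 : IsUnit (cM 0 A).det) : Good p A (seqF p hp A) := by
  refine ⟨seqF_zero p hp A, fun m => ?_⟩
  rcases eq_or_ne m 0 with rfl | hm
  · simp [seqF_zero, Nat.dvd_zero]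
  rw [sum_antidiag_split m A (seqF p hp A)]
  have hrec : seqF p hp A m = (cM 0 A)⁻¹ *
        ((if p ∣ m then seqF p hp A (m / p) else 0) * cM 0 A -
          ∑ i ∈ Finset.Ico 1 (m + 1), cM i A * seqF p hp A (m - i)) := by
    rw [seqF]
    rw [dif_neg hm, Finset.sum_attach (Finset.Ico 1 (m + 1))
      (fun i => cM i A * seqF p hp A (m - i))]
  rw [hrec, ← Matrix.mul_assoc, Matrix.mul_nonsing_inv _ hA0, one_mul]
  abel

end MahlerAux


open MahlerAux in
/-- Let `p ≥ 2` and let `A` be an `n×n` matrix over `ℂ[[z]]` with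
`A(0)` invertible. Then there is a unique matrix `F` over `ℂ[[z]]` with `F(0) = 1`
and `A(z)·F(z) = F(z^p)·A(0)`; moreover any such `F` is invertible over `ℂ[[z]]`. -/
theorem mahler_formal_fundamental_solution_at_zero
    (p n : ℕ) (hp : 2 ≤ p)
    (A : Matrix (Fin n) (Fin n) (PowerSeries ℂ))
    (hA0 : IsUnit ((A.map (PowerSeries.constantCoeff (R := ℂ))).det)) :
    (∃! F : Matrix (Fin n) (Fin n) (PowerSeries ℂ),
        F.map (PowerSeries.constantCoeff (R := ℂ)) = 1 ∧
        A * F = (F.map (mahlerSubst p)) *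
          ((A.map (PowerSeries.constantCoeff (R := ℂ))).map (PowerSeries.C (R := ℂ)))) ∧
    (∀ F : Matrix (Fin n) (Fin n) (PowerSeries ℂ),
        F.map (PowerSeries.constantCoeff (R := ℂ)) = 1 →
        A * F = (F.map (mahlerSubst p)) *
          ((A.map (PowerSeries.constantCoeff (R := ℂ))).map (PowerSeries.C (R := ℂ))) →
        IsUnit F.det) := by
  have hmap0 : A.map (PowerSeries.constantCoeff (R := ℂ)) = cM 0 A := by
    ext a b; simp [cM, Matrix.map_apply]
  rw [hmap0] at hA0 ⊢
  -- constant coeff map as cM 0 in general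
  have hcm0 : ∀ M : Matrix (Fin n) (Fin n) (PowerSeries ℂ),
      M.map (PowerSeries.constantCoeff (R := ℂ)) = cM 0 M := by
    intro M; ext a b; simp [cM, Matrix.map_apply]
  -- characterization of RHS coefficient
  have hRHS : ∀ (F : Matrix (Fin n) (Fin n) (PowerSeries ℂ)) (m : ℕ),
      cM m ((F.map (mahlerSubst p)) * ((cM 0 A).map (PowerSeries.C (R := ℂ))))
        = (if p ∣ m then cM (m / p) F else 0) * cM 0 A := by
    intro F m
    rw [cM_mul]
    have h1 : ∀ j, cM (n := n) j ((cM 0 A).map (PowerSeries.C (R := ℂ)))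
        = if j = 0 then cM 0 A else 0 := by
      intro j; ext a b
      simp [cM, Matrix.map_apply, PowerSeries.coeff_C]
      split_ifs <;> simp [Matrix.zero_apply]
    have h2 : ∀ i, cM (n := n) i (F.map (mahlerSubst p))
        = if p ∣ i then cM (i / p) F else 0 := by
      intro i; ext a b
      simp only [cM, Matrix.map_apply, mahlerSubst, PowerSeries.coeff_mk]
      split_ifs <;> simp [cM, Matrix.map_apply]
    rw [Finset.sum_eq_single_of_mem (m, 0) (Finset.HasAntidiagonal.mem_antidiagonal.mpr (by simp))
      (fun ij hij hne => by
        obtain ⟨i, j⟩ := ij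
        have hs := Finset.HasAntidiagonal.mem_antidiagonal.mp hij
        have hj : j ≠ 0 := fun h => hne (by simp at hs ⊢; omega)
        rw [h1, if_neg hj, mul_zero])]
    rw [h1, h2, if_pos rfl]
  -- characterization of equation
  have hEq : ∀ F : Matrix (Fin n) (Fin n) (PowerSeries ℂ),
      (A * F = (F.map (mahlerSubst p)) * ((cM 0 A).map (PowerSeries.C (R := ℂ))))
        ↔ ∀ m, (∑ ij ∈ Finset.HasAntidiagonal.antidiagonal m, cM ij.1 A * cM ij.2 F)
            = (if p ∣ m then cM (m / p) F else 0) * cM 0 A := by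
    intro F
    constructor
    · intro h m
      rw [← cM_mul, h, hRHS]
    · intro h
      apply matrix_ext_coeff
      intro m
      rw [cM_mul, hRHS, h]
  -- solution ↔ Good
  have hSol : ∀ F : Matrix (Fin n) (Fin n) (PowerSeries ℂ),
      (F.map (PowerSeries.constantCoeff (R := ℂ)) = 1 ∧
        A * F = (F.map (mahlerSubst p)) * ((cM 0 A).map (PowerSeries.C (R := ℂ))))
        ↔ Good p A (fun m => cM m F) := by
    intro F
    rw [hcm0, hEq]
    rfl
  set F₀ : Matrix (Fin n) (Fin n) (PowerSeries ℂ) :=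
    Matrix.of fun a b => PowerSeries.mk fun m => seqF p hp A m a b with hF₀
  have hcF₀ : ∀ m, cM m F₀ = seqF p hp A m := by
    intro m; ext a b; simp [cM, Matrix.map_apply, hF₀, PowerSeries.coeff_mk]
  have hF₀good : Good p A (fun m => cM m F₀) := by
    have := seqF_good hp hA0
    convert this using 1
    funext m; exact hcF₀ m
  constructor
  · refine ⟨F₀, (hSol F₀).mpr hF₀good, ?_⟩
    intro G hG
    have hGgood := (hSol G).mp hG
    apply matrix_ext_coeff
    intro m
    have := good_unique hp hA0 hGgood hF₀good
    exact congrFun this m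
  · intro F hF0 _
    rw [PowerSeries.isUnit_iff_constantCoeff, RingHom.map_det, RingHom.mapMatrix_apply, hF0, Matrix.det_one]
    exact isUnit_one
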